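/- If α ∈ ℝ \ [ψ̲, ψ̄], then for every s ≥ 0 and every K > D_ψ the sum Σ_{ω∈I^*, |S_ω(ψ−α)| ≤ K} exp(s·S_ω φ) is finite; in particular the α-Poincaré exponent satisfies δ_α = 0. -/

import Mathlib

open Filter MeasureTheory Set
open scoped BigOperators ENNReal Topology

namespace ThermoTransient

/-- The full shift space over the alphabet `I`. -/
abbrev Seq (I : Type*) : Type _ := ℕ → I

variable {I : Type*} [Fintype I]

/-- The left shift `σ`. -/
def shift (ω : Seq I) : Seq I := fun i => ω (i + 1)

/-- Birkhoff sums `S_n f`. -/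
noncomputable def birk (f : Seq I → ℝ) (n : ℕ) (ω : Seq I) : ℝ :=
  ∑ k ∈ Finset.range n, f (shift^[k] ω)

/-- The cylinder set of the finite word `w`. -/
def cyl (w : List I) : Set (Seq I) := {x | ∀ i : Fin w.length, x i.1 = w.get i}

/-- `S_ω f = sup_{x ∈ [ω]} S_{|ω|} f (x)`. -/
noncomputable def Sword (f : Seq I → ℝ) (w : List I) : ℝ :=
  sSup (birk f w.length '' cyl w)

/-- Hölder continuity with respect to the metric
`d(ω,τ) = exp(-max{k : ω and τ agree on the first k coordinates})`:
there are `a > 0` and a constant `C` with `|f ω - f τ| ≤ C * exp (-a n)` whenever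
`ω` and `τ` agree on the first `n` coordinates. -/
def Holder (f : Seq I → ℝ) : Prop :=
  ∃ a : ℝ, 0 < a ∧ ∃ C : ℝ, ∀ n : ℕ, ∀ ω τ : Seq I,
    (∀ j < n, ω j = τ j) → |f ω - f τ| ≤ C * Real.exp (-(a * n))

/-- The distortion constant `D_f`. -/
noncomputable def distortion (f : Seq I → ℝ) : ℝ :=
  sSup {r : ℝ | ∃ w : List I, w ≠ [] ∧ ∃ x ∈ cyl w, ∃ y ∈ cyl w,
    r = |birk f w.length x - birk f w.length y|}

/-- The prefix word `ω|_n`. -/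
def pre (ω : Seq I) (n : ℕ) : List I := List.ofFn fun k : Fin n => ω k.1

/-- The classical topological pressure `𝔓(f)`. -/
noncomputable def pressure (f : Seq I → ℝ) : ℝ :=
  limsup (fun n : ℕ => (n : ℝ)⁻¹ *
    Real.log (∑ u : Fin n → I, Real.exp (Sword f (List.ofFn u)))) atTop

/-- The classical topological pressure `𝔓(f, J)` restricted to the subshift over the
subalphabet `{i : I | p i}`. -/
noncomputable def pressureOn (p : I → Prop) (f : Seq I → ℝ) : ℝ :=
  letI := Classical.decPred p
  limsup (fun n : ℕ => (n : ℝ)⁻¹ *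
    Real.log (∑ u : Fin n → {i : I // p i},
      Real.exp (Sword f (List.ofFn fun k => (u k : I))))) atTop

/-- `ψ̲ = inf_ω liminf_n S_n ψ(ω)/n`. -/
noncomputable def psiLow (ψ : Seq I → ℝ) : ℝ :=
  ⨅ ω : Seq I, liminf (fun n : ℕ => birk ψ n ω / n) atTop

/-- `ψ̄ = sup_ω limsup_n S_n ψ(ω)/n`. -/
noncomputable def psiUpp (ψ : Seq I → ℝ) : ℝ :=
  ⨆ ω : Seq I, limsup (fun n : ℕ => birk ψ n ω / n) atTop

/-- The partition sum `ζ_n(f,ψ,K) = Σ_{ω ∈ C_n(ψ,K)} exp (S_ω f)`, where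
`C_n(ψ,K)` is the set of words of length `n` with `|S_ω ψ| ≤ K`. -/
noncomputable def Zn (f ψ : Seq I → ℝ) (K : ℝ) (n : ℕ) : ℝ :=
  ∑ u : Fin n → I,
    if |Sword ψ (List.ofFn u)| ≤ K then Real.exp (Sword f (List.ofFn u)) else 0

/-- `P(f,ψ,K) = limsup_n (1/n) log ζ_n(f,ψ,K)` (with value `⊥` contributed by empty
partition sums). -/
noncomputable def fibrePK (f ψ : Seq I → ℝ) (K : ℝ) : EReal :=
  limsup (fun n : ℕ => if Zn f ψ K n = 0 then (⊥ : EReal)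
    else (((n : ℝ)⁻¹ * Real.log (Zn f ψ K n) : ℝ) : EReal)) atTop

/-- The fibre-induced pressure `P(f,ψ) = lim_{K → ∞} P(f,ψ,K)`. -/
noncomputable def fibreP (f ψ : Seq I → ℝ) : EReal :=
  limsup (fun K : ℝ => fibrePK f ψ K) atTop

/-- The `α`-Poincaré exponent
`δ_α = inf {s ≥ 0 : Σ_{ω ∈ I^*, |S_ω (ψ - α)| ≤ K} exp (s S_ω φ) < ∞}`. -/
noncomputable def poincare (φ ψ : Seq I → ℝ) (α K : ℝ) : ℝ :=
  sInf {s : ℝ | 0 ≤ s ∧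
    Summable (fun w : {w : List I // |Sword (fun x => ψ x - α) w| ≤ K} =>
      Real.exp (s * Sword φ (w : List I)))}

/-- `μ` is the Gibbs measure of the potential `g`: a shift-invariant Borel probability
measure satisfying the Gibbs property. -/
def IsGibbs [MeasurableSpace I] (g : Seq I → ℝ) (μ : Measure (Seq I)) : Prop :=
  IsProbabilityMeasure μ ∧
  (∀ s : Set (Seq I), MeasurableSet s → μ (shift ⁻¹' s) = μ s) ∧
  ∃ c : ℝ, 1 ≤ c ∧ ∀ w : List I, w ≠ [] → ∀ x ∈ cyl w,
    (μ (cyl w)).toReal ≤ c * Real.exp (birk g w.length x - w.length * pressure g) ∧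
    c⁻¹ * Real.exp (birk g w.length x - w.length * pressure g) ≤ (μ (cyl w)).toReal

/-- Iterated composition `h_{ω₁} ∘ ⋯ ∘ h_{ωₙ}` of the inverse branches along a word. -/
def hcomp (h : I → ℝ → ℝ) : List I → ℝ → ℝ
  | [] => id
  | i :: w => h i ∘ hcomp h w

/-- An expanding interval map `F` with finitely many `C^{1+ε}` full branches on
pairwise disjoint subintervals of `[0,1]`, together with its inverse branches `h i`,
coding map `proj = π`, and an integer step length function `step = Ψ` constant on the
branch intervals. -/
structure ExpandingSystem (I : Type*) [Fintype I] where
  F : ℝ → ℝ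
  F' : ℝ → ℝ
  branch : I → Set ℝ
  step : ℝ → ℤ
  h : I → ℝ → ℝ
  proj : Seq I → ℝ
  two_le_card : 2 ≤ Fintype.card I
  branch_subset : ∀ i, branch i ⊆ Icc (0:ℝ) 1
  branch_ordConnected : ∀ i, (branch i).OrdConnected
  branch_interior : ∀ i, (interior (branch i)).Nonempty
  branch_disjoint : Pairwise fun i j => Disjoint (branch i) (branch j)
  branch_bij : ∀ i, BijOn F (branch i) (Icc (0:ℝ) 1)
  branch_deriv : ∀ i, ∀ x ∈ branch i, HasDerivWithinAt F (F' x) (branch i) x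
  expanding : ∀ i, ∀ x ∈ branch i, 1 < |F' x|
  deriv_holder : ∃ ε : ℝ, 0 < ε ∧ ∃ C : ℝ, ∀ i, ∀ x ∈ branch i, ∀ y ∈ branch i,
    |F' x - F' y| ≤ C * |x - y| ^ ε
  h_cont : ∀ i, ContinuousOn (h i) (Icc (0:ℝ) 1)
  h_maps : ∀ i, MapsTo (h i) (Icc (0:ℝ) 1) (closure (branch i))
  h_inv : ∀ i, ∀ x ∈ branch i, h i (F x) = x
  step_const : ∀ i, ∀ x ∈ branch i, ∀ y ∈ branch i, step x = step y
  proj_spec : ∀ ω : Seq I, (⋂ n : ℕ, hcomp h (pre ω n) '' Icc (0:ℝ) 1) = {proj ω}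

/-- The countable set `D = ⋃_{ω ∈ I^*} h_{ω₁} ∘ ⋯ ∘ h_{ωₙ}({0,1})`. -/
def ExpandingSystem.Dset (E : ExpandingSystem I) : Set ℝ :=
  ⋃ w : List I, hcomp E.h w '' ({0, 1} : Set ℝ)

/-- The set `R = (π(Σ) \ D) + ℤ`. -/
def ExpandingSystem.Rset (E : ExpandingSystem I) : Set ℝ :=
  {x : ℝ | ∃ k : ℤ, x - k ∈ range E.proj \ E.Dset}

/-- The `Ψ`-lift `F_Ψ(x) = k + F(x - k) + Ψ(x - k)` for the integer `k` with
`x - k ∈ [0,1]` (on `R` this integer is `⌊x⌋`). -/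
noncomputable def ExpandingSystem.lift (E : ExpandingSystem I) : ℝ → ℝ :=
  fun x => (⌊x⌋ : ℝ) + E.F (x - ⌊x⌋) + (E.step (x - ⌊x⌋) : ℝ)

/-- `φ` is a geometric potential for `E`: Hölder continuous, negative, and equal to
`-log |F'(π ω)|` except possibly on a finite set. -/
def ExpandingSystem.IsGeomPotential (E : ExpandingSystem I) (φ : Seq I → ℝ) : Prop :=
  Holder φ ∧ (∀ ω, φ ω < 0) ∧
    {ω : Seq I | φ ω ≠ -Real.log |E.F' (E.proj ω)|}.Finite

/-- `ψ` is a symbolic step length function for `E`: integer-valued, constant on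
one-cylinder sets, and equal to `Ψ ∘ π` except possibly on a finite set. -/
def ExpandingSystem.IsSymbolicStep (E : ExpandingSystem I) (ψ : Seq I → ℝ) : Prop :=
  (∀ ω, ∃ k : ℤ, ψ ω = (k : ℝ)) ∧ (∀ ω τ : Seq I, ω 0 = τ 0 → ψ ω = ψ τ) ∧
    {ω : Seq I | ψ ω ≠ (E.step (E.proj ω) : ℝ)}.Finite

section Aux

variable {I : Type*} [Fintype I]

lemma shift_iter (ω : Seq I) (k i : ℕ) : shift^[k] ω i = ω (i + k) := by
  induction k generalizing ω with
  | zero => rfl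
  | succ k ih =>
    rw [Function.iterate_succ_apply, ih (shift ω)]
    exact congrArg ω (by omega)

lemma birk_add' (f : Seq I → ℝ) (m n : ℕ) (x : Seq I) :
    birk f (m + n) x = birk f m x + birk f n (shift^[m] x) :=
  birkhoffSum_add shift f m n x

lemma birk_sub_const (f : Seq I → ℝ) (α : ℝ) (n : ℕ) (x : Seq I) :
    birk (fun t => f t - α) n x = birk f n x - n * α := by
  simp [birk, Finset.sum_sub_distrib, mul_comm]

lemma abs_birk_le {ψ : Seq I → ℝ} {M : ℝ} (hM : ∀ x, |ψ x| ≤ M) (k : ℕ) (ω : Seq I) :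
    |birk ψ k ω| ≤ k * M := by
  calc |birk ψ k ω| ≤ ∑ j ∈ Finset.range k, |ψ (shift^[j] ω)| :=
        Finset.abs_sum_le_sum_abs _ _
    _ ≤ ∑ _j ∈ Finset.range k, M := Finset.sum_le_sum fun j _ => hM _
    _ = k * M := by rw [Finset.sum_const, Finset.card_range, nsmul_eq_mul]

lemma holder_distortion {ψ : Seq I → ℝ} (hψ : Holder ψ) :
    ∃ D : ℝ, 0 ≤ D ∧ ∀ (n : ℕ) (x y : Seq I), (∀ j < n, x j = y j) →
      |birk ψ n x - birk ψ n y| ≤ D := by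
  obtain ⟨a, ha, C, hC⟩ := hψ
  set C' := max C 0 with hC'def
  have hC'0 : (0:ℝ) ≤ C' := le_max_right _ _
  have hC' : ∀ (n : ℕ) (ω τ : Seq I), (∀ j < n, ω j = τ j) →
      |ψ ω - ψ τ| ≤ C' * Real.exp (-(a * n)) := fun n ω τ h =>
    (hC n ω τ h).trans (mul_le_mul_of_nonneg_right (le_max_left _ _) (Real.exp_pos _).le)
  set r := Real.exp (-a) with hrdef
  have hr0 : (0:ℝ) ≤ r := (Real.exp_pos _).le
  have hr1 : r < 1 := Real.exp_lt_one_iff.mpr (by linarith)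
  have h1r : (0:ℝ) < 1 - r := by linarith
  refine ⟨C' * (1 - r)⁻¹, mul_nonneg hC'0 (inv_nonneg.mpr h1r.le), ?_⟩
  intro n x y hxy
  have hterm : ∀ k ∈ Finset.range n,
      |ψ (shift^[k] x) - ψ (shift^[k] y)| ≤ C' * r ^ (n - k) := by
    intro k hk
    have hkn := Finset.mem_range.mp hk
    have hag : ∀ j < n - k, (shift^[k] x) j = (shift^[k] y) j := by
      intro j hj
      rw [shift_iter, shift_iter]
      exact hxy (j + k) (by omega)
    have h := hC' (n - k) _ _ hag
    have hexp : Real.exp (-(a * ((n - k : ℕ) : ℝ))) = r ^ (n - k) := by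
      rw [hrdef, ← Real.exp_nat_mul]
      ring_nf
    rwa [hexp] at h
  have hsum : ∑ k ∈ Finset.range n, r ^ (n - k) ≤ (1 - r)⁻¹ := by
    have h1 : ∑ k ∈ Finset.range n, r ^ (n - k) = ∑ k ∈ Finset.range n, r ^ (k + 1) := by
      rw [← Finset.sum_range_reflect (fun k => r ^ (k + 1)) n]
      refine Finset.sum_congr rfl fun j hj => ?_
      have := Finset.mem_range.mp hj
      congr 1
      omega
    have h2 : ∑ k ∈ Finset.range n, r ^ (k + 1) ≤ ∑ k ∈ Finset.range n, r ^ k :=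
      Finset.sum_le_sum fun k _ => pow_le_pow_of_le_one hr0 hr1.le (Nat.le_succ k)
    have h3 : ∑ k ∈ Finset.range n, r ^ k ≤ (1 - r)⁻¹ := by
      have := Summable.sum_le_tsum (Finset.range n) (fun i _ => pow_nonneg hr0 i)
        (summable_geometric_of_lt_one hr0 hr1)
      rwa [tsum_geometric_of_lt_one hr0 hr1] at this
    linarith
  calc |birk ψ n x - birk ψ n y|
      = |∑ k ∈ Finset.range n, (ψ (shift^[k] x) - ψ (shift^[k] y))| := by
        rw [birk, birk, ← Finset.sum_sub_distrib]
    _ ≤ ∑ k ∈ Finset.range n, |ψ (shift^[k] x) - ψ (shift^[k] y)| :=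
        Finset.abs_sum_le_sum_abs _ _
    _ ≤ ∑ k ∈ Finset.range n, C' * r ^ (n - k) := Finset.sum_le_sum hterm
    _ = C' * ∑ k ∈ Finset.range n, r ^ (n - k) := by rw [Finset.mul_sum]
    _ ≤ C' * (1 - r)⁻¹ := mul_le_mul_of_nonneg_left hsum hC'0

lemma holder_bound [Nonempty I] {ψ : Seq I → ℝ} (hψ : Holder ψ) :
    ∃ M : ℝ, 0 ≤ M ∧ ∀ x, |ψ x| ≤ M := by
  obtain ⟨a, ha, C, hC⟩ := hψ
  set x₀ : Seq I := fun _ => Classical.arbitrary I with hx₀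
  refine ⟨|ψ x₀| + max C 0, by positivity, fun x => ?_⟩
  have h := hC 0 x x₀ (fun j hj => absurd hj (Nat.not_lt_zero j))
  simp only [Nat.cast_zero, mul_zero, neg_zero, Real.exp_zero, mul_one] at h
  have h2 : |ψ x| - |ψ x₀| ≤ |ψ x - ψ x₀| := abs_sub_abs_le_abs_sub _ _
  have h3 : C ≤ max C 0 := le_max_left _ _
  linarith

lemma avg_bound {ψ : Seq I → ℝ} {M : ℝ} (hM0 : 0 ≤ M) (hM : ∀ x, |ψ x| ≤ M)
    (m : ℕ) (ω : Seq I) : |birk ψ m ω / m| ≤ M := by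
  rcases Nat.eq_zero_or_pos m with hm | hm
  · subst hm; simpa [birk] using hM0
  · have hmR : (0:ℝ) < m := by exact_mod_cast hm
    rw [abs_div, Nat.abs_cast, div_le_iff₀ hmR]
    have := abs_birk_le hM m ω
    have hc : (m:ℝ) * M = M * m := mul_comm _ _
    linarith

lemma periodic_avg_tendsto {ψ : Seq I → ℝ} {M : ℝ} (hM0 : 0 ≤ M) (hM : ∀ x, |ψ x| ≤ M)
    {n : ℕ} (hn : 0 < n) {y : Seq I} (hper : shift^[n] y = y) :
    Filter.Tendsto (fun m : ℕ => birk ψ m y / m) atTop (𝓝 (birk ψ n y / n)) := by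
  have hnR : (0:ℝ) < n := by exact_mod_cast hn
  rw [← tendsto_sub_nhds_zero_iff]
  apply squeeze_zero_norm' (a := fun m : ℕ => 2 * n * M / m)
  · filter_upwards [eventually_ge_atTop 1] with m hm
    have hmR : (0:ℝ) < m := by exact_mod_cast hm
    obtain ⟨q, r, hr, hmqr⟩ : ∃ q r : ℕ, r < n ∧ n * q + r = m :=
      ⟨m / n, m % n, Nat.mod_lt _ hn, Nat.div_add_mod m n⟩
    have hfixgen : ∀ q : ℕ, shift^[n * q] y = y := by
      intro q
      rw [Function.iterate_mul]
      exact Function.IsFixedPt.iterate hper q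
    have hbper : ∀ q : ℕ, birk ψ (n * q) y = q * birk ψ n y := by
      intro q
      induction q with
      | zero => simp [birk]
      | succ q ih =>
        rw [Nat.mul_succ, birk_add', hfixgen q, ih]
        push_cast; ring
    have hbm : birk ψ m y = q * birk ψ n y + birk ψ r y := by
      rw [← hmqr, birk_add', hfixgen q, hbper q]
    have hmr : (m : ℝ) = n * q + r := by exact_mod_cast hmqr.symm
    have hne1 : (n:ℝ) ≠ 0 := ne_of_gt hnR
    have hne2 : (n:ℝ) * q + r ≠ 0 := by rw [← hmr]; exact ne_of_gt hmR
    have key : birk ψ m y / m - birk ψ n y / n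
        = ((n:ℝ) * birk ψ r y - r * birk ψ n y) / (n * m) := by
      rw [hbm, hmr, div_sub_div _ _ hne2 hne1,
        div_eq_div_iff (mul_ne_zero hne2 hne1) (mul_ne_zero hne1 hne2)]
      ring
    rw [key, Real.norm_eq_abs, abs_div, abs_of_pos (by positivity : (0:ℝ) < (n:ℝ) * m)]
    have hrn : (r:ℝ) ≤ n := by exact_mod_cast hr.le
    have hbr := abs_birk_le hM r y
    have hbn := abs_birk_le hM n y
    have h1 : |(n:ℝ) * birk ψ r y - r * birk ψ n y| ≤ 2 * (n:ℝ) * n * M := by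
      have ht : |(n:ℝ) * birk ψ r y - r * birk ψ n y|
          ≤ |(n:ℝ) * birk ψ r y| + |(r:ℝ) * birk ψ n y| := abs_sub _ _
      rw [abs_mul, abs_mul, Nat.abs_cast, Nat.abs_cast] at ht
      have hr0 : (0:ℝ) ≤ r := Nat.cast_nonneg r
      have e1 : (n:ℝ) * |birk ψ r y| ≤ (n:ℝ) * ((r:ℝ) * M) :=
        mul_le_mul_of_nonneg_left hbr hnR.le
      have e2 : (r:ℝ) * |birk ψ n y| ≤ (r:ℝ) * ((n:ℝ) * M) :=
        mul_le_mul_of_nonneg_left hbn hr0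
      have e3 : (n:ℝ) * ((r:ℝ) * M) ≤ (n:ℝ) * ((n:ℝ) * M) :=
        mul_le_mul_of_nonneg_left (mul_le_mul_of_nonneg_right hrn hM0) hnR.le
      have e4 : (r:ℝ) * ((n:ℝ) * M) ≤ (n:ℝ) * ((n:ℝ) * M) :=
        mul_le_mul_of_nonneg_right hrn (by positivity)
      nlinarith [ht, e1, e2, e3, e4]
    rw [div_le_div_iff₀ (by positivity) hmR]
    nlinarith [mul_le_mul_of_nonneg_right h1 hmR.le]
  · exact tendsto_const_div_atTop_nhds_zero_nat (2 * n * M)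

lemma key_finite {ψ : Seq I → ℝ} (hψH : Holder ψ) {α : ℝ}
    (hα : α ∉ Icc (psiLow ψ) (psiUpp ψ)) {K : ℝ} (hK : distortion ψ < K) :
    {w : List I | |Sword (fun x => ψ x - α) w| ≤ K}.Finite := by
  by_contra hinf
  set S := {w : List I | |Sword (fun x => ψ x - α) w| ≤ K} with hSdef
  have hne : Nonempty I := by
    by_contra h
    rw [not_nonempty_iff] at h
    refine hinf (Set.Finite.subset (Set.finite_singleton ([] : List I)) fun w _ => ?_)
    cases w with
    | nil => rfl
    | cons a _ => exact (h.false a).elim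
  obtain ⟨D, hD0, hD⟩ := holder_distortion hψH
  obtain ⟨M, hM0, hM⟩ := holder_bound hψH
  have havg : ∀ (m : ℕ) (ω : Seq I), |birk ψ m ω / m| ≤ M := avg_bound hM0 hM
  have hbddB : BddBelow (Set.range fun ω : Seq I =>
      Filter.liminf (fun m : ℕ => birk ψ m ω / m) atTop) := by
    refine ⟨-M, ?_⟩
    rintro _ ⟨ω, rfl⟩
    refine le_liminf_of_le ?_ (Filter.Eventually.of_forall fun m => (abs_le.mp (havg m ω)).1)
    exact Filter.isCoboundedUnder_ge_of_le atTop fun m => (abs_le.mp (havg m ω)).2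
  have hbddA : BddAbove (Set.range fun ω : Seq I =>
      Filter.limsup (fun m : ℕ => birk ψ m ω / m) atTop) := by
    refine ⟨M, ?_⟩
    rintro _ ⟨ω, rfl⟩
    refine limsup_le_of_le ?_ (Filter.Eventually.of_forall fun m => (abs_le.mp (havg m ω)).2)
    exact Filter.isCoboundedUnder_le_of_le atTop fun m => (abs_le.mp (havg m ω)).1
  have hword : ∀ w : List I, w ∈ S → 0 < w.length →
      psiLow ψ ≤ α + K / w.length ∧ α - (K + D) / w.length ≤ psiUpp ψ := by
    intro w hwS hn
    set n := w.length with hndef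
    set y : Seq I := fun i => w.get ⟨i % n, Nat.mod_lt _ hn⟩ with hydef
    have hycyl : y ∈ cyl w := by
      intro i
      exact congrArg w.get (Fin.ext (Nat.mod_eq_of_lt i.isLt))
    have hagree : ∀ z ∈ cyl w, ∀ j < n, z j = y j := by
      intro z hz j hj
      rw [hz ⟨j, hj⟩, hycyl ⟨j, hj⟩]
    have hper : shift^[n] y = y := by
      funext i
      rw [shift_iter]
      exact congrArg w.get (Fin.ext (Nat.add_mod_right i n))
    have hnR : (0:ℝ) < n := by exact_mod_cast hn
    have hmem : birk ψ n y - n * α ∈ birk (fun x => ψ x - α) n '' cyl w :=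
      ⟨y, hycyl, birk_sub_const ψ α n y⟩
    have hboundall : ∀ v ∈ birk (fun x => ψ x - α) n '' cyl w,
        v ≤ birk ψ n y - n * α + D := by
      rintro _ ⟨z, hz, rfl⟩
      rw [birk_sub_const]
      have := (abs_le.mp (hD n z y (hagree z hz))).2
      linarith
    have hbdd : BddAbove (birk (fun x => ψ x - α) n '' cyl w) :=
      ⟨birk ψ n y - n * α + D, fun v hv => hboundall v hv⟩
    have hub : Sword (fun x => ψ x - α) w ≤ birk ψ n y - n * α + D :=
      csSup_le ⟨_, hmem⟩ hboundall
    have hlb : birk ψ n y - n * α ≤ Sword (fun x => ψ x - α) w := le_csSup hbdd hmem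
    simp only [hSdef, Set.mem_setOf_eq] at hwS
    obtain ⟨hKl, hKu⟩ := abs_le.mp hwS
    have hT := periodic_avg_tendsto hM0 hM hn hper
    have hlow : psiLow ψ ≤ birk ψ n y / n := by
      rw [← hT.liminf_eq]
      exact ciInf_le hbddB y
    have hupp : birk ψ n y / n ≤ psiUpp ψ := by
      rw [← hT.limsup_eq]
      exact le_ciSup hbddA y
    constructor
    · have h1 : birk ψ n y ≤ (n:ℝ) * α + K := by linarith
      have h2 : birk ψ n y / n ≤ ((n:ℝ) * α + K) / n := by gcongr
      have h3 : ((n:ℝ) * α + K) / n = α + K / n := by field_simp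
      linarith
    · have h1 : (n:ℝ) * α - (K + D) ≤ birk ψ n y := by linarith
      have h2 : ((n:ℝ) * α - (K + D)) / n ≤ birk ψ n y / n := by gcongr
      have h3 : ((n:ℝ) * α - (K + D)) / n = α - (K + D) / n := by field_simp
      linarith
  have hlong : ∀ N : ℕ, ∃ w ∈ S, N ≤ w.length := by
    intro N
    by_contra h
    push_neg at h
    exact hinf ((List.finite_length_lt I N).subset fun w hw => h w hw)
  have h1 : psiLow ψ ≤ α := by
    refine le_of_forall_pos_le_add fun ε hε => ?_
    obtain ⟨N, hN⟩ := exists_nat_gt (K / ε)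
    obtain ⟨w, hwS, hwl⟩ := hlong (N + 1)
    have hn : 0 < w.length := by omega
    have hnR : (0:ℝ) < w.length := by exact_mod_cast hn
    have hb := (hword w hwS hn).1
    have hKε : K / w.length ≤ ε := by
      rw [div_le_iff₀ hnR]
      have hK1 : K < N * ε := (div_lt_iff₀ hε).mp hN
      have hNn : (N:ℝ) ≤ w.length := by exact_mod_cast (by omega : N ≤ w.length)
      nlinarith
    linarith
  have h2 : α ≤ psiUpp ψ := by
    refine le_of_forall_pos_le_add fun ε hε => ?_
    obtain ⟨N, hN⟩ := exists_nat_gt ((K + D) / ε)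
    obtain ⟨w, hwS, hwl⟩ := hlong (N + 1)
    have hn : 0 < w.length := by omega
    have hnR : (0:ℝ) < w.length := by exact_mod_cast hn
    have hb := (hword w hwS hn).2
    have hKε : (K + D) / w.length ≤ ε := by
      rw [div_le_iff₀ hnR]
      have hK1 : K + D < N * ε := (div_lt_iff₀ hε).mp hN
      have hNn : (N:ℝ) ≤ w.length := by exact_mod_cast (by omega : N ≤ w.length)
      nlinarith
    linarith
  exact hα ⟨h1, h2⟩

end Aux

/-- implication (1.4): if `α ∉ [ψ̲, ψ̄]` then the Poincaré series
converges for every `s ≥ 0` and every `K > D_ψ`, and hence `δ_α = 0`. -/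
theorem statement4 {I : Type*} [Fintype I] (φ ψ : Seq I → ℝ)
    (hφH : Holder φ) (hφneg : ∀ ω, φ ω < 0) (hψH : Holder ψ)
    (α : ℝ) (hα : α ∉ Icc (psiLow ψ) (psiUpp ψ)) :
    (∀ s : ℝ, 0 ≤ s → ∀ K : ℝ, distortion ψ < K →
        Summable (fun w : {w : List I // |Sword (fun x => ψ x - α) w| ≤ K} =>
          Real.exp (s * Sword φ (w : List I)))) ∧
      ∀ K : ℝ, distortion ψ < K → poincare φ ψ α K = 0 := by
  have main : ∀ s : ℝ, 0 ≤ s → ∀ K : ℝ, distortion ψ < K →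
      Summable (fun w : {w : List I // |Sword (fun x => ψ x - α) w| ≤ K} =>
        Real.exp (s * Sword φ (w : List I))) := by
    intro s hs K hK
    haveI : Finite {w : List I // |Sword (fun x => ψ x - α) w| ≤ K} :=
      (key_finite hψH hα hK).to_subtype
    exact Summable.of_finite
  refine ⟨main, fun K hK => ?_⟩
  have hset : {s : ℝ | 0 ≤ s ∧
      Summable (fun w : {w : List I // |Sword (fun x => ψ x - α) w| ≤ K} =>
        Real.exp (s * Sword φ (w : List I)))} = Ici 0 :=
    Set.ext fun s => ⟨fun h => h.1, fun h => ⟨h, main s h K hK⟩⟩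
  rw [poincare, hset, csInf_Ici]

end ThermoTransient
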